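/- Let f: ℂ → ℂ be an entire function satisfying |f(x+iy)| ≤ C e^{π|y|} for all real x, y, and suppose f vanishes at every integer. Then f(z) = c·sin(πz) for some constant c. -/

import Mathlib

open Complex Real

lemma aux_abs_sq (x y : ℝ) :
    (‖Complex.sin ((Real.pi:ℂ) * (x + y*Complex.I))‖)^2 =
      Real.sin (Real.pi*x)^2 * Real.cosh (Real.pi*y)^2
        + Real.cos (Real.pi*x)^2 * Real.sinh (Real.pi*y)^2 := by
  have h : (Real.pi:ℂ) * (x + y*Complex.I)
      = (↑(Real.pi*x) : ℂ) + (↑(Real.pi*y):ℂ) * Complex.I := by push_cast; ring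
  rw [h, Complex.sin_add_mul_I, ← Complex.ofReal_sin, ← Complex.ofReal_cos,
    ← Complex.ofReal_cosh, ← Complex.ofReal_sinh, ← Complex.ofReal_mul, ← Complex.ofReal_mul,
    Complex.sq_norm, Complex.normSq_add_mul_I]
  ring

lemma aux_sinh_le (x y : ℝ) :
    |Real.sinh (Real.pi*y)| ≤ ‖Complex.sin ((Real.pi:ℂ) * (x + y*Complex.I))‖ := by
  have h := aux_abs_sq x y
  have h1 := Real.sin_sq_add_cos_sq (Real.pi*x)
  have h2 := Real.cosh_sq (Real.pi*y)
  have h3 : (0:ℝ) ≤ ‖Complex.sin ((Real.pi:ℂ) * (x + y*Complex.I))‖ :=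
    norm_nonneg _
  nlinarith [_root_.sq_abs (Real.sinh (Real.pi*y)), abs_nonneg (Real.sinh (Real.pi*y)),
    sq_nonneg (Real.sin (Real.pi*x)), sq_nonneg (Real.sinh (Real.pi*y)),
    sq_nonneg (|Real.sinh (Real.pi*y)| - ‖Complex.sin ((Real.pi:ℂ) * (x + y*Complex.I))‖)]

lemma aux_sin_le (x y : ℝ) :
    |Real.sin (Real.pi*x)| ≤ ‖Complex.sin ((Real.pi:ℂ) * (x + y*Complex.I))‖ := by
  have h := aux_abs_sq x y
  have h2 := Real.cosh_sq (Real.pi*y)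
  have h3 : (0:ℝ) ≤ ‖Complex.sin ((Real.pi:ℂ) * (x + y*Complex.I))‖ :=
    norm_nonneg _
  nlinarith [_root_.sq_abs (Real.sin (Real.pi*x)), abs_nonneg (Real.sin (Real.pi*x)),
    sq_nonneg (Real.cos (Real.pi*x) * Real.sinh (Real.pi*y)),
    sq_nonneg (|Real.sin (Real.pi*x)| - ‖Complex.sin ((Real.pi:ℂ) * (x + y*Complex.I))‖)]

lemma aux_half (k : ℤ) : |Real.sin (Real.pi*((k:ℝ)+1/2))| = 1 := by
  have h : Real.pi*((k:ℝ)+1/2) = (k:ℝ)*Real.pi + Real.pi/2 := by ring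
  rw [h, Real.sin_add, Real.sin_int_mul_pi, Real.cos_pi_div_two, Real.sin_pi_div_two]
  simpa using Real.abs_cos_int_mul_pi k


lemma aux_round {x : ℝ} {n : ℤ} (h : |x - n| < 1/2) : round x = n := by
  rw [round_eq, Int.floor_eq_iff]
  rw [abs_lt] at h
  constructor <;> [push_cast; push_cast] <;> linarith


theorem stmt_11 (f : ℂ → ℂ) (hf : Differentiable ℂ f) (C : ℝ)
    (hbd : ∀ x y : ℝ, ‖f (x + y * Complex.I)‖ ≤ C * Real.exp (Real.pi * |y|))
    (hz : ∀ n : ℤ, f (n : ℂ) = 0) :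
    ∃ c : ℂ, ∀ z : ℂ, f z = c * Complex.sin ((Real.pi : ℂ) * z) := by
  set S : ℂ → ℂ := fun z => Complex.sin ((Real.pi:ℂ) * z) with hSdef
  have hS : Differentiable ℂ S :=
    Complex.differentiable_sin.comp ((differentiable_const _).mul differentiable_id)
  have hSzero : ∀ z : ℂ, S z = 0 ↔ ∃ n : ℤ, z = (n:ℂ) := by
    intro z
    simp only [hSdef, Complex.sin_eq_zero_iff]
    constructor
    · rintro ⟨k, hk⟩
      have hπ : (Real.pi:ℂ) ≠ 0 := Complex.ofReal_ne_zero.mpr Real.pi_ne_zero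
      exact ⟨k, mul_left_cancel₀ hπ (by rw [hk]; ring)⟩
    · rintro ⟨n, rfl⟩
      exact ⟨n, by ring⟩
  have hSn : ∀ n : ℤ, S (n:ℂ) = 0 := fun n => (hSzero _).mpr ⟨n, rfl⟩
  set G : ℂ → ℂ := fun z => dslope f ((round z.re : ℤ):ℂ) z / dslope S ((round z.re : ℤ):ℂ) z
    with hGdef
  -- quotient formula
  have hquot : ∀ (z : ℂ), S z ≠ 0 → ∀ n : ℤ,
      dslope f ((n:ℤ):ℂ) z / dslope S ((n:ℤ):ℂ) z = f z / S z := by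
    intro z hSz n
    have hzn : z ≠ (n:ℂ) := by rintro rfl; exact hSz (hSn n)
    rw [dslope_of_ne _ hzn, dslope_of_ne _ hzn, slope_def_field, slope_def_field,
      hz n, hSn n, sub_zero, sub_zero]
    have hsub : z - (n:ℂ) ≠ 0 := sub_ne_zero.mpr hzn
    field_simp
  -- G is entire
  have hGdiff : Differentiable ℂ G := by
    intro z₀
    by_cases h : S z₀ = 0
    · obtain ⟨n, rfl⟩ := (hSzero z₀).mp h
      have hround : ∀ z : ℂ, z ∈ Metric.ball ((n:ℤ):ℂ) (1/2) → round z.re = n := by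
        intro z hzb
        apply aux_round
        have h1 : |z.re - (n:ℝ)| ≤ ‖z - (n:ℂ)‖ := by
          have := Complex.abs_re_le_norm (z - (n:ℂ))
          simpa [Complex.sub_re, Complex.intCast_re] using this
        have h2 : ‖z - (n:ℂ)‖ < 1/2 := by
          simpa [Metric.mem_ball, Complex.dist_eq] using hzb
        linarith
      have hev : G =ᶠ[nhds ((n:ℤ):ℂ)]
          fun z => dslope f ((n:ℤ):ℂ) z / dslope S ((n:ℤ):ℂ) z := by
        filter_upwards [Metric.ball_mem_nhds _ (by norm_num : (0:ℝ) < 1/2)] with z hzb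
        simp only [hGdef, hround z hzb]
      rw [hev.differentiableAt_iff]
      have hnum : DifferentiableAt ℂ (dslope f ((n:ℤ):ℂ)) ((n:ℤ):ℂ) := by
        obtain ⟨p, hp⟩ := hf.analyticAt ((n:ℤ):ℂ)
        exact hp.has_fpower_series_dslope_fslope.differentiableAt
      have hden : DifferentiableAt ℂ (dslope S ((n:ℤ):ℂ)) ((n:ℤ):ℂ) := by
        obtain ⟨p, hp⟩ := hS.analyticAt ((n:ℤ):ℂ)
        exact hp.has_fpower_series_dslope_fslope.differentiableAt
      have hderiv : HasDerivAt S (Complex.cos ((Real.pi:ℂ) * (n:ℂ)) * (Real.pi:ℂ)) ((n:ℤ):ℂ) := by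
        have h1 : HasDerivAt (fun z : ℂ => (Real.pi:ℂ) * z) (Real.pi:ℂ) ((n:ℤ):ℂ) := by
          simpa using (hasDerivAt_id ((n:ℤ):ℂ)).const_mul (Real.pi:ℂ)
        exact (Complex.hasDerivAt_sin _).comp _ h1
      have hdne : dslope S ((n:ℤ):ℂ) ((n:ℤ):ℂ) ≠ 0 := by
        rw [dslope_same, hderiv.deriv]
        have hcast : (Real.pi:ℂ) * ((n:ℤ):ℂ) = ((Real.pi * (n:ℝ) : ℝ):ℂ) := by push_cast; ring
        rw [hcast, ← Complex.ofReal_cos]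
        have hcos : Real.cos (Real.pi * (n:ℝ)) ≠ 0 := by
          have := Real.abs_cos_int_mul_pi n
          intro hc
          rw [mul_comm] at hc
          rw [hc] at this
          simp at this
        exact mul_ne_zero (Complex.ofReal_ne_zero.mpr hcos) (Complex.ofReal_ne_zero.mpr Real.pi_ne_zero)
      exact hnum.div hden hdne
    · have hopen : IsOpen {z : ℂ | S z ≠ 0} :=
        isOpen_compl_singleton.preimage hS.continuous
      have hev : G =ᶠ[nhds z₀] fun z => f z / S z := by
        filter_upwards [hopen.mem_nhds h] with z hzne
        exact hquot z hzne _
      rw [hev.differentiableAt_iff]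
      exact (hf z₀).div (hS z₀) h
  -- basic facts
  have hC0 : 0 ≤ C := by
    have h := hbd 0 0
    have h0 : (0:ℝ) ≤ ‖f ((0:ℝ) + (0:ℝ) * Complex.I)‖ := norm_nonneg _
    have : C * Real.exp (Real.pi * |(0:ℝ)|) = C := by simp
    linarith [h, h0, this.ge, this.le]
  set M : ℝ := C * Real.exp Real.pi with hM
  have hfb : ∀ w : ℂ, ‖f w‖ ≤ C * Real.exp (Real.pi * |w.im|) := by
    intro w; have := hbd w.re w.im; rwa [Complex.re_add_im] at this
  have hSlow1 : ∀ w : ℂ, |Real.sinh (Real.pi * w.im)| ≤ ‖S w‖ := by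
    intro w; have := aux_sinh_le w.re w.im; rwa [Complex.re_add_im] at this
  have hSlow2 : ∀ w : ℂ, |Real.sin (Real.pi * w.re)| ≤ ‖S w‖ := by
    intro w; have := aux_sin_le w.re w.im; rwa [Complex.re_add_im] at this
  have habsG : ∀ w : ℂ, S w ≠ 0 →
      ‖G w‖ = ‖f w‖ / ‖S w‖ := by
    intro w hw
    show ‖dslope f _ w / dslope S _ w‖ = _
    rw [hquot w hw, norm_div]
  have hexp4 : (4:ℝ) ≤ Real.exp Real.pi := by
    have h1 : Real.pi + 1 ≤ Real.exp Real.pi := by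
      have := Real.add_one_le_exp Real.pi
      linarith
    linarith [Real.pi_gt_three]
  have hGbound : ∀ z : ℂ, ‖G z‖ ≤ M := by
    intro z
    by_cases hy : 1 ≤ |z.im|
    · -- away from the real axis
      have ht : (1:ℝ) ≤ Real.pi * |z.im| := by nlinarith [Real.pi_gt_three]
      have hsinh : |Real.sinh (Real.pi * z.im)| = Real.sinh (Real.pi * |z.im|) := by
        rw [Real.abs_sinh, abs_mul, abs_of_pos Real.pi_pos]
      have hlow : Real.exp (Real.pi * |z.im|) / 4 ≤ ‖S z‖ := by
        have h1 := hSlow1 z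
        rw [hsinh] at h1
        have hA : 2 ≤ Real.exp (Real.pi * |z.im|) := by
          have := Real.add_one_le_exp (Real.pi * |z.im|)
          linarith
        have hB : Real.exp (-(Real.pi * |z.im|)) ≤ 1 :=
          Real.exp_le_one_iff.mpr (by linarith)
        have hsinh2 : Real.exp (Real.pi * |z.im|) / 4 ≤ Real.sinh (Real.pi * |z.im|) := by
          rw [Real.sinh_eq]
          linarith
        linarith
      have hSne : S z ≠ 0 := by
        intro h0
        rw [h0] at hlow
        simp only [norm_zero] at hlow
        linarith [Real.exp_pos (Real.pi * |z.im|)]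
      rw [habsG z hSne]
      have habsS : 0 < ‖S z‖ :=
        lt_of_lt_of_le (by positivity) hlow
      rw [div_le_iff₀ habsS, hM]
      have hfz := hfb z
      calc ‖f z‖ ≤ C * Real.exp (Real.pi * |z.im|) := hfz
        _ = (C * 4) * (Real.exp (Real.pi * |z.im|) / 4) := by ring
        _ ≤ (C * Real.exp Real.pi) * (Real.exp (Real.pi * |z.im|) / 4) := by
            apply mul_le_mul_of_nonneg_right _ (by positivity)
            nlinarith
        _ ≤ C * Real.exp Real.pi * ‖S z‖ :=
            mul_le_mul_of_nonneg_left hlow (by positivity)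
    · -- in the strip: maximum principle on a rectangle
      push_neg at hy
      set n : ℤ := round z.re with hn
      set U : Set ℂ := Set.Ioo ((n:ℝ)-1/2) ((n:ℝ)+1/2) ×ℂ Set.Ioo (-1:ℝ) 1 with hU
      have hUb : Bornology.IsBounded U :=
        (Metric.isBounded_Ioo _ _).reProdIm (Metric.isBounded_Ioo _ _)
      have hzc : z ∈ closure U := by
        rw [hU, Complex.closure_reProdIm,
          closure_Ioo (by linarith : ((n:ℝ)-1/2) < (n:ℝ)+1/2).ne,
          closure_Ioo (by norm_num : (-1:ℝ) ≠ 1)]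
        refine Complex.mem_reProdIm.mpr ⟨?_, ?_⟩
        · have := abs_sub_round z.re
          rw [← hn] at this
          rw [abs_le] at this
          exact ⟨by linarith [this.1], by linarith [this.2]⟩
        · rw [abs_lt] at hy
          exact ⟨by linarith [hy.1], by linarith [hy.2]⟩
      have hkey : ∀ w : ℂ, (1:ℝ) ≤ ‖S w‖ → |w.im| ≤ 1 →
          ‖G w‖ ≤ M := by
        intro w hS1 him
        have hSne : S w ≠ 0 := by
          intro h0; rw [h0] at hS1; simp at hS1; linarith
        rw [habsG w hSne]
        have hfw := hfb w
        have hexple : Real.exp (Real.pi * |w.im|) ≤ Real.exp Real.pi := by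
          apply Real.exp_le_exp.mpr
          nlinarith [Real.pi_pos]
        have habsS : 0 < ‖S w‖ := by linarith
        rw [div_le_iff₀ habsS, hM]
        calc ‖f w‖ ≤ C * Real.exp (Real.pi * |w.im|) := hfw
          _ ≤ C * Real.exp Real.pi := mul_le_mul_of_nonneg_left hexple hC0
          _ = C * Real.exp Real.pi * 1 := (mul_one _).symm
          _ ≤ C * Real.exp Real.pi * ‖S w‖ :=
              mul_le_mul_of_nonneg_left hS1 (by positivity)
      have hfr : ∀ w ∈ frontier U, ‖G w‖ ≤ M := by
        intro w hw
        rw [hU, Complex.frontier_reProdIm] at hw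
        rcases hw with hw | hw
        · -- horizontal edges: |im| = 1
          rw [Complex.mem_reProdIm, frontier_Ioo (by norm_num : (-1:ℝ) < 1)] at hw
          have him : |w.im| = 1 := by
            have h2 := hw.2
            simp only [Set.mem_insert_iff, Set.mem_singleton_iff] at h2
            rcases h2 with h | h <;> rw [h] <;> norm_num
          refine hkey w ?_ him.le
          have h1 := hSlow1 w
          have h2 : |Real.sinh (Real.pi * w.im)| = Real.sinh Real.pi := by
            rw [Real.abs_sinh, abs_mul, abs_of_pos Real.pi_pos, him, mul_one]
          rw [h2] at h1
          have h3 : Real.pi ≤ Real.sinh Real.pi :=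
            Real.self_le_sinh_iff.mpr Real.pi_pos.le
          linarith [Real.pi_gt_three]
        · -- vertical edges: re = n ± 1/2
          rw [Complex.mem_reProdIm,
            frontier_Ioo (by linarith : ((n:ℝ)-1/2) < (n:ℝ)+1/2),
            closure_Ioo (by norm_num : (-1:ℝ) ≠ 1)] at hw
          have him : |w.im| ≤ 1 := abs_le.mpr ⟨hw.2.1, hw.2.2⟩
          refine hkey w ?_ him
          have h1 := hSlow2 w
          have h2 : |Real.sin (Real.pi * w.re)| = 1 := by
            have h2 := hw.1
            simp only [Set.mem_insert_iff, Set.mem_singleton_iff] at h2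
            rcases h2 with h | h
            · have : w.re = ((n-1:ℤ):ℝ) + 1/2 := by push_cast; rw [h]; ring
              rw [this]; exact aux_half (n-1)
            · have : w.re = ((n:ℤ):ℝ) + 1/2 := by push_cast; rw [h]
              rw [this]; exact aux_half n
          linarith [h1, h2.ge]
      have := Complex.norm_le_of_forall_mem_frontier_norm_le hUb
        hGdiff.diffContOnCl hfr hzc
      exact this
  -- Liouville
  have hb : Bornology.IsBounded (Set.range G) := by
    rw [isBounded_iff_forall_norm_le]
    exact ⟨M, by rintro x ⟨w, rfl⟩; exact hGbound w⟩
  refine ⟨G 0, fun w => ?_⟩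
  by_cases hSw : S w = 0
  · obtain ⟨m, rfl⟩ := (hSzero w).mp hSw
    rw [hz m]
    have h0 : Complex.sin ((Real.pi:ℂ) * ((m:ℤ):ℂ)) = 0 := hSn m
    rw [h0, mul_zero]
  · have h1 : G w = G 0 := hGdiff.apply_eq_apply_of_bounded hb w 0
    have h2 : G w = f w / S w := hquot w hSw _
    rw [h2, div_eq_iff hSw] at h1
    exact h1
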